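/- Let (C,S) be a pair with C real symmetric n×n and S symmetric positive definite n×n, and let μ₁ ≥ ... ≥ μₙ be the generalized eigenvalues. The map A ↦ trace(AᵀCA(AᵀSA)⁻¹), defined on full-rank n×m matrices, achieves the value μ₁ + ... + μₘ, and this value is its supremum. -/

import Mathlib

open Matrix

lemma lp_bound (n m : ℕ) (hmn : m ≤ n) (mu : Fin n → ℝ) (hmu : Antitone mu)
    (t : Fin n → ℝ) (h0 : ∀ i, 0 ≤ t i) (h1 : ∀ i, t i ≤ 1)
    (hsum : ∑ i, t i = m) :
    ∑ i, mu i * t i ≤ ∑ i : Fin m, mu (Fin.castLE hmn i) := by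
  have hreindex : ∀ g : Fin n → ℝ,
      ∑ i : Fin n, (if (i : ℕ) < m then g i else 0) = ∑ i : Fin m, g (Fin.castLE hmn i) := by
    intro g
    set G : ℕ → ℝ := fun k => if h : k < n then g ⟨k, h⟩ else 0 with hG
    have h1' : ∑ i : Fin n, (if (i : ℕ) < m then g i else 0)
        = ∑ k ∈ Finset.range n, (if k < m then G k else 0) := by
      rw [Finset.sum_range fun k => if k < m then G k else 0]
      refine Finset.sum_congr rfl fun i _ => ?_
      simp [hG, i.isLt]
    have h2' : ∑ i : Fin m, g (Fin.castLE hmn i) = ∑ k ∈ Finset.range m, G k := by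
      rw [Finset.sum_range G]
      refine Finset.sum_congr rfl fun i _ => ?_
      simp [hG, show (i : ℕ) < n from lt_of_lt_of_le i.isLt hmn]
      rfl
    rw [h1', h2', ← Finset.sum_filter]
    congr 1
    ext k
    simp only [Finset.mem_filter, Finset.mem_range]
    omega
  rcases Nat.eq_zero_or_pos m with hm | hm
  · subst hm
    have hz : ∀ i ∈ Finset.univ, t i = 0 :=
      (Finset.sum_eq_zero_iff_of_nonneg (fun i _ => h0 i)).mp (by simpa using hsum)
    simp only [Finset.univ_eq_empty, Finset.sum_empty]
    calc ∑ i, mu i * t i = 0 := by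
          refine Finset.sum_eq_zero fun i _ => ?_
          rw [hz i (Finset.mem_univ i), mul_zero]
      _ ≤ 0 := le_refl 0
  · set c : ℝ := mu ⟨m - 1, by omega⟩ with hc
    set χ : Fin n → ℝ := fun i => if (i : ℕ) < m then 1 else 0 with hχ
    have hχsum : ∑ i, χ i = m := by
      have := hreindex (fun _ => (1 : ℝ))
      simp only [hχ]
      rw [this]
      simp
    have hrhs : ∑ i : Fin m, mu (Fin.castLE hmn i) = ∑ i, mu i * χ i := by
      rw [← hreindex mu]
      refine Finset.sum_congr rfl fun i _ => ?_
      simp only [hχ]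
      split <;> simp
    have hterm : ∀ i, (mu i - c) * (t i - χ i) ≤ 0 := by
      intro i
      by_cases h : (i : ℕ) < m
      · have hle : c ≤ mu i := hmu (by simp [Fin.le_def]; omega)
        have : t i - χ i ≤ 0 := by simp [hχ, h]; linarith [h1 i]
        exact mul_nonpos_of_nonneg_of_nonpos (by linarith) this
      · have hle : mu i ≤ c := hmu (by simp [Fin.le_def]; omega)
        have : 0 ≤ t i - χ i := by simp [hχ, h]; linarith [h0 i]
        exact mul_nonpos_of_nonpos_of_nonneg (by linarith) this
    have hexp : ∑ i, (mu i - c) * (t i - χ i)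
        = (∑ i, mu i * t i) - (∑ i, mu i * χ i) - c * ((∑ i, t i) - ∑ i, χ i) := by
      have h : ∀ i, (mu i - c) * (t i - χ i)
          = (mu i * t i - mu i * χ i) - (c * t i - c * χ i) := fun i => by ring
      simp_rw [h, Finset.sum_sub_distrib]
      rw [← Finset.mul_sum, ← Finset.mul_sum]
      ring
    have hsum0 : ∑ i, (mu i - c) * (t i - χ i) ≤ 0 :=
      Finset.sum_nonpos fun i _ => hterm i
    rw [hrhs]
    rw [hexp, hsum, hχsum] at hsum0
    linarith

lemma proj_diag_bounds {n : ℕ} (P : Matrix (Fin n) (Fin n) ℝ)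
    (hsym : Pᵀ = P) (hidem : P * P = P) (i : Fin n) :
    0 ≤ P i i ∧ P i i ≤ 1 := by
  have hPij : ∀ j, P j i = P i j := fun j => by
    have := congrFun (congrFun hsym i) j
    rwa [transpose_apply] at this
  have key : P i i = ∑ j, (P i j) ^ 2 := by
    conv_lhs => rw [← hidem]
    rw [Matrix.mul_apply]
    exact Finset.sum_congr rfl fun j _ => by rw [hPij j, sq]
  have h0 : 0 ≤ P i i := by rw [key]; positivity
  have h2 : (P i i) ^ 2 ≤ P i i := by
    conv_rhs => rw [key]
    exact Finset.single_le_sum (f := fun j => (P i j) ^ 2)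
      (fun j _ => sq_nonneg _) (Finset.mem_univ i)
  exact ⟨h0, by nlinarith⟩

lemma gmrq_happ {n k : ℕ} (M : Matrix (Fin n) (Fin n) ℝ) (w : Fin k → Fin n → ℝ)
    (i j : Fin k) :
    ((Matrix.of fun p q => w q p)ᵀ * M * (Matrix.of fun p q => w q p)) i j
      = w i ⬝ᵥ (M *ᵥ w j) := by
  rw [Matrix.mul_assoc, Matrix.mul_apply]
  simp only [transpose_apply, of_apply, dotProduct, mulVec, Matrix.mul_apply]

/-- The supremum of the generalized matrix Rayleigh quotient
`A ↦ trace (Aᵀ C A (Aᵀ S A)⁻¹)` over full-rank `n × m` matrices equals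
`μ₁ + ... + μₘ`, the sum of the top `m` generalized eigenvalues of `(C, S)`,
and this value is attained. -/
theorem gmrq_sup_attained (n m : ℕ) (hmn : m ≤ n)
    (C S : Matrix (Fin n) (Fin n) ℝ) (hC : C.IsSymm) (hS : S.PosDef)
    (mu : Fin n → ℝ) (hmu : Antitone mu)
    (v : Fin n → Fin n → ℝ)
    (hEig : ∀ i, C.mulVec (v i) = mu i • S.mulVec (v i))
    (hOrtho : ∀ i j, v i ⬝ᵥ S.mulVec (v j) = if i = j then (1 : ℝ) else 0) :
    (∃ A : Matrix (Fin n) (Fin m) ℝ, A.rank = m ∧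
      (Aᵀ * C * A * (Aᵀ * S * A)⁻¹).trace = ∑ i : Fin m, mu (Fin.castLE hmn i)) ∧
    (∀ A : Matrix (Fin n) (Fin m) ℝ, A.rank = m →
      (Aᵀ * C * A * (Aᵀ * S * A)⁻¹).trace ≤ ∑ i : Fin m, mu (Fin.castLE hmn i)) := by
  classical
  constructor
  · -- attainment
    set A : Matrix (Fin n) (Fin m) ℝ := Matrix.of fun p q => v (Fin.castLE hmn q) p with hA
    have hASA : Aᵀ * S * A = 1 := by
      ext i j
      rw [hA, gmrq_happ S (fun q => v (Fin.castLE hmn q)) i j, hOrtho]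
      simp [Matrix.one_apply, Fin.castLE_inj]
    have hACA : Aᵀ * C * A = diagonal (fun i => mu (Fin.castLE hmn i)) := by
      ext i j
      rw [hA, gmrq_happ C (fun q => v (Fin.castLE hmn q)) i j, hEig, dotProduct_smul,
        hOrtho, diagonal_apply]
      rcases eq_or_ne i j with h | h <;> simp [h, Fin.castLE_inj]
    refine ⟨A, ?_, ?_⟩
    · refine le_antisymm (A.rank_le_card_width.trans (by simp)) ?_
      have h := Matrix.rank_mul_le_right (Aᵀ * S) A
      rw [hASA] at h
      simpa using h
    · rw [hASA, inv_one, mul_one, hACA, trace_diagonal]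
  · set V : Matrix (Fin n) (Fin n) ℝ := Matrix.of fun p q => v q p with hVdef
    have hVS : Vᵀ * S * V = 1 := by
      ext i j
      rw [hVdef, gmrq_happ S v i j, hOrtho]
      simp [Matrix.one_apply]
    have hVC : Vᵀ * C * V = diagonal mu := by
      ext i j
      rw [hVdef, gmrq_happ C v i j, hEig, dotProduct_smul, hOrtho, diagonal_apply]
      rcases eq_or_ne i j with h | h <;> simp [h]
    have hVunit : IsUnit V := by
      exact (Matrix.isUnit_iff_isUnit_det V).mpr (Matrix.isUnit_det_of_left_inverse hVS)
    have hVd : IsUnit V.det := (Matrix.isUnit_iff_isUnit_det V).mp hVunit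
    intro A hA
    set W : Matrix (Fin n) (Fin m) ℝ := V⁻¹ * A with hWdef
    have hAW : A = V * W := by
      rw [hWdef, ← Matrix.mul_assoc, Matrix.mul_nonsing_inv V hVd, Matrix.one_mul]
    have hWrank : W.rank = m := by
      rw [hWdef, Matrix.rank_mul_eq_right_of_isUnit_det V⁻¹ A (Matrix.isUnit_nonsing_inv_det V hVd)]
      exact hA
    set G : Matrix (Fin m) (Fin m) ℝ := Wᵀ * W with hGdef
    have hsand : ∀ M : Matrix (Fin n) (Fin n) ℝ,
        (V * W)ᵀ * M * (V * W) = Wᵀ * (Vᵀ * M * V) * W := by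
      intro M
      rw [Matrix.transpose_mul]
      simp only [Matrix.mul_assoc]
    have hASA : Aᵀ * S * A = G := by
      rw [hAW, hsand, hVS, Matrix.mul_one, hGdef]
    have hACA : Aᵀ * C * A = Wᵀ * diagonal mu * W := by
      rw [hAW, hsand, hVC]
    -- G is invertible
    have hGrank : G.rank = m := by rw [hGdef, Matrix.rank_transpose_mul_self, hWrank]
    have hGunit : IsUnit G := by
      rw [← Matrix.mulVec_injective_iff_isUnit]
      have hker : LinearMap.ker G.mulVecLin = ⊥ := by
        have hrn := LinearMap.finrank_range_add_finrank_ker G.mulVecLin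
        rw [show (Module.finrank ℝ (LinearMap.range G.mulVecLin)) = G.rank from rfl, hGrank] at hrn
        simp only [Module.finrank_fintype_fun_eq_card, Fintype.card_fin] at hrn
        have : Module.finrank ℝ (LinearMap.ker G.mulVecLin) = 0 := by omega
        exact Submodule.finrank_eq_zero.mp this
      intro x y hxy
      have : G.mulVecLin x = G.mulVecLin y := hxy
      exact (LinearMap.ker_eq_bot.mp hker) this
    have hGd : IsUnit G.det := (Matrix.isUnit_iff_isUnit_det G).mp hGunit
    have hGsym : Gᵀ = G := by rw [hGdef, Matrix.transpose_mul, Matrix.transpose_transpose]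
    set P : Matrix (Fin n) (Fin n) ℝ := W * G⁻¹ * Wᵀ with hPdef
    have hPsym : Pᵀ = P := by
      rw [hPdef]
      simp only [Matrix.transpose_mul, Matrix.transpose_transpose, Matrix.transpose_nonsing_inv,
        hGsym, Matrix.mul_assoc]
    have hPidem : P * P = P := by
      have h1 : P * P = W * G⁻¹ * (Wᵀ * W) * (G⁻¹ * Wᵀ) := by
        rw [hPdef]; simp only [Matrix.mul_assoc]
      rw [h1, ← hGdef, Matrix.mul_assoc (W * G⁻¹) G (G⁻¹ * Wᵀ), ← Matrix.mul_assoc G G⁻¹ Wᵀ,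
        Matrix.mul_nonsing_inv G hGd, Matrix.one_mul, hPdef, Matrix.mul_assoc]
    have htrace : (Aᵀ * C * A * (Aᵀ * S * A)⁻¹).trace = ∑ i, mu i * P i i := by
      rw [hASA, hACA]
      have h1 : Wᵀ * diagonal mu * W * G⁻¹ = Wᵀ * (diagonal mu * (W * G⁻¹)) := by
        simp only [Matrix.mul_assoc]
      rw [h1, Matrix.trace_mul_comm, Matrix.mul_assoc, Matrix.mul_assoc, ← Matrix.mul_assoc W G⁻¹ Wᵀ,
        ← hPdef]
      simp [Matrix.trace, Matrix.diag, Matrix.diagonal_mul]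
    have htrP : ∑ i, P i i = m := by
      have h1 : P.trace = ((G⁻¹ * Wᵀ) * W).trace := by
        rw [hPdef, Matrix.mul_assoc, Matrix.trace_mul_comm]
      rw [Matrix.mul_assoc, ← hGdef, Matrix.nonsing_inv_mul G hGd, Matrix.trace_one] at h1
      simpa [Matrix.trace, Matrix.diag] using h1
    rw [htrace]
    exact lp_bound n m hmn mu hmu (fun i => P i i)
      (fun i => (proj_diag_bounds P hPsym hPidem i).1)
      (fun i => (proj_diag_bounds P hPsym hPidem i).2) htrP
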